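/- Let m ≥ 2 and δ > 0, and let {A(t)}_{t≥0} be a sequence of m×m doubly stochastic matrices with A_{ii}(t) ≥ δ for all t ≥ 0 and all i ∈ [m]. Then for any initial vector x(0) ∈ ℝ^m, the sequence x(t) defined by x(t+1) = A(t) x(t) converges, i.e., lim_{t→∞} x(t) exists. -/

import Mathlib

open Filter Topology

/-- Sum of the `k` smallest entries of `x`. -/
noncomputable def bsum {m : ℕ} (x : Fin m → ℝ) (k : ℕ) : ℝ :=
  ∑ j ∈ Finset.univ.filter (fun j : Fin m => (j : ℕ) < k), x (Tuple.sort x j)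

lemma bsum_card {m : ℕ} (k : ℕ) (hk : k ≤ m) :
    (Finset.univ.filter (fun j : Fin m => (j : ℕ) < k)).card = k := by
  have : (Finset.univ.filter (fun j : Fin m => (j : ℕ) < k))
      = Finset.map (Fin.castLEEmb hk) Finset.univ := by
    ext j
    simp only [Finset.mem_filter, Finset.mem_univ, true_and, Finset.mem_map]
    constructor
    · intro hj
      exact ⟨⟨(j : ℕ), hj⟩, by apply Fin.ext; simp⟩
    · rintro ⟨a, -, rfl⟩
      simp
  rw [this, Finset.card_map, Finset.card_univ, Fintype.card_fin]

/-- Linear programming bound: if `0 ≤ c ≤ 1` pointwise and `∑ c = k`, then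
`∑ c j * x j` is at least the sum of the `k` smallest entries of `x`. -/
lemma bsum_le {m : ℕ} (x : Fin m → ℝ) (k : ℕ) (hk : k ≤ m)
    (c : Fin m → ℝ) (h0 : ∀ j, 0 ≤ c j) (h1 : ∀ j, c j ≤ 1)
    (hs : ∑ j, c j = k) : bsum x k ≤ ∑ j, c j * x j := by
  rcases Nat.eq_zero_or_pos k with rfl | hkpos
  · have hc : ∀ j ∈ Finset.univ, c j = 0 := by
      intro j _
      have := (Finset.sum_eq_zero_iff_of_nonneg (fun j _ => h0 j)).mp (by simpa using hs)
      exact this j (Finset.mem_univ j)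
    simp [bsum]
    rw [Finset.sum_eq_zero]
    intro j _; rw [hc j (Finset.mem_univ j), zero_mul]
  · set σ := Tuple.sort x with hσ
    have hkm : k - 1 < m := by omega
    set θ := x (σ ⟨k - 1, hkm⟩) with hθ
    set F := Finset.univ.filter (fun j : Fin m => (j : ℕ) < k) with hF
    have hre : ∑ j, c j * x j = ∑ j, c (σ j) * x (σ j) :=
      (Equiv.sum_comp σ (fun j => c j * x j)).symm
    have hre2 : ∑ j, c (σ j) = (k : ℝ) := by
      rw [Equiv.sum_comp σ c]; exact hs
    have hmono := Tuple.monotone_sort x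
    have hxle : ∀ j ∈ F, x (σ j) ≤ θ := by
      intro j hj
      rw [hF, Finset.mem_filter] at hj
      exact hmono (show j ≤ ⟨k - 1, hkm⟩ from by
        rw [Fin.le_def]; simp; omega)
    have hxge : ∀ j ∈ Fᶜ, θ ≤ x (σ j) := by
      intro j hj
      rw [hF, Finset.mem_compl, Finset.mem_filter] at hj
      push_neg at hj
      have hj' := hj (Finset.mem_univ j)
      exact hmono (show (⟨k - 1, hkm⟩ : Fin m) ≤ j from by
        rw [Fin.le_def]; simp; omega)
    have hsplit : ∑ j, c (σ j) * x (σ j)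
        = ∑ j ∈ F, c (σ j) * x (σ j) + ∑ j ∈ Fᶜ, c (σ j) * x (σ j) := by
      rw [Finset.sum_add_sum_compl]
    have hsplit2 : ∑ j, c (σ j) = ∑ j ∈ F, c (σ j) + ∑ j ∈ Fᶜ, c (σ j) := by
      rw [Finset.sum_add_sum_compl]
    have hsub : ∑ j ∈ F, c (σ j) * x (σ j) - ∑ j ∈ F, x (σ j)
        = ∑ j ∈ F, (c (σ j) - 1) * x (σ j) := by
      rw [← Finset.sum_sub_distrib]
      exact Finset.sum_congr rfl fun j _ => by ring
    -- lower bounds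
    have hb1 : ∑ j ∈ F, (c (σ j) - 1) * θ ≤ ∑ j ∈ F, (c (σ j) - 1) * x (σ j) := by
      apply Finset.sum_le_sum
      intro j hj
      exact mul_le_mul_of_nonpos_left (hxle j hj) (by linarith [h1 (σ j)])
    have hb2 : ∑ j ∈ Fᶜ, c (σ j) * θ ≤ ∑ j ∈ Fᶜ, c (σ j) * x (σ j) := by
      apply Finset.sum_le_sum
      intro j hj
      exact mul_le_mul_of_nonneg_left (hxge j hj) (h0 (σ j))
    have hcard : (F.card : ℝ) = (k : ℝ) := by
      rw [hF, bsum_card k hk]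
    have hzero : ∑ j ∈ F, (c (σ j) - 1) * θ + ∑ j ∈ Fᶜ, c (σ j) * θ = 0 := by
      rw [← Finset.sum_mul, ← Finset.sum_mul, Finset.sum_sub_distrib,
        Finset.sum_const, nsmul_eq_mul]
      have hsum : ∑ j ∈ F, c (σ j) + ∑ j ∈ Fᶜ, c (σ j) = (k : ℝ) := by
        rw [← hsplit2]; exact hre2
      have hc0 : (∑ j ∈ F, c (σ j) - (F.card : ℝ) * 1) + ∑ j ∈ Fᶜ, c (σ j) = 0 := by
        rw [hcard]; linarith
      calc (∑ j ∈ F, c (σ j) - (F.card : ℝ) * 1) * θ + (∑ j ∈ Fᶜ, c (σ j)) * θ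
          = ((∑ j ∈ F, c (σ j) - (F.card : ℝ) * 1) + ∑ j ∈ Fᶜ, c (σ j)) * θ := by ring
        _ = 0 := by rw [hc0, zero_mul]
    have hbsum : bsum x k = ∑ j ∈ F, x (σ j) := by rw [bsum, hF, hσ]
    rw [hre, hsplit, hbsum]
    linarith [hb1, hb2, hzero, hsub]

/-- Energy dissipation: variance identity + single-term bound. -/
lemma energy_drop {m : ℕ} (A : Matrix (Fin m) (Fin m) ℝ) (δ : ℝ)
    (hnonneg : ∀ i j, 0 ≤ A i j) (hrow : ∀ i, ∑ j, A i j = 1)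
    (hcol : ∀ j, ∑ i, A i j = 1) (hdiag : ∀ i, δ ≤ A i i)
    (x : Fin m → ℝ) (i0 : Fin m) :
    δ * (A.mulVec x i0 - x i0) ^ 2 ≤ ∑ j, x j ^ 2 - ∑ i, (A.mulVec x i) ^ 2 := by
  set y := A.mulVec x with hy
  have key : ∑ i, ∑ j, A i j * (x j - y i) ^ 2 = ∑ j, x j ^ 2 - ∑ i, y i ^ 2 := by
    have h1 : ∀ i, ∑ j, A i j * (x j - y i) ^ 2
        = ∑ j, A i j * x j ^ 2 - y i ^ 2 := by
      intro i
      have hyi : y i = ∑ j, A i j * x j := by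
        simp [hy, Matrix.mulVec, dotProduct]
      have : ∑ j, A i j * (x j - y i) ^ 2
          = ∑ j, (A i j * x j ^ 2 - 2 * y i * (A i j * x j) + A i j * y i ^ 2) := by
        apply Finset.sum_congr rfl; intro j _; ring
      rw [this, Finset.sum_add_distrib, Finset.sum_sub_distrib, ← Finset.mul_sum, ← hyi]
      rw [← Finset.sum_mul, hrow i]
      ring
    rw [Finset.sum_congr rfl (fun i _ => h1 i), Finset.sum_sub_distrib,
      Finset.sum_comm]
    congr 1
    apply Finset.sum_congr rfl
    intro j _
    rw [← Finset.sum_mul, hcol j, one_mul]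
  rw [← key]
  calc δ * (y i0 - x i0) ^ 2 ≤ A i0 i0 * (x i0 - y i0) ^ 2 := by
        have := hdiag i0
        nlinarith [sq_nonneg (y i0 - x i0), sq_nonneg (x i0 - y i0)]
      _ ≤ ∑ j, A i0 j * (x j - y i0) ^ 2 := by
        apply Finset.single_le_sum (f := fun j => A i0 j * (x j - y i0) ^ 2)
        · intro j _; exact mul_nonneg (hnonneg i0 j) (sq_nonneg _)
        · exact Finset.mem_univ i0
      _ ≤ ∑ i, ∑ j, A i j * (x j - y i) ^ 2 := by
        apply Finset.single_le_sum (f := fun i => ∑ j, A i j * (x j - y i) ^ 2)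
        · intro i _
          exact Finset.sum_nonneg fun j _ => mul_nonneg (hnonneg i j) (sq_nonneg _)
        · exact Finset.mem_univ i0

/-- bsum is monotone along one step of the dynamics. -/
lemma bsum_mono_step {m : ℕ} (A : Matrix (Fin m) (Fin m) ℝ)
    (hnonneg : ∀ i j, 0 ≤ A i j) (hrow : ∀ i, ∑ j, A i j = 1)
    (hcol : ∀ j, ∑ i, A i j = 1) (x : Fin m → ℝ) (k : ℕ) (hk : k ≤ m) :
    bsum x k ≤ bsum (A.mulVec x) k := by
  set y := A.mulVec x with hy
  set σ := Tuple.sort y with hσ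
  set F := Finset.univ.filter (fun j : Fin m => (j : ℕ) < k) with hF
  set G := F.image σ with hG
  have hGcard : G.card = k := by
    rw [hG, Finset.card_image_of_injective _ σ.injective, hF, bsum_card k hk]
  set c : Fin m → ℝ := fun j => ∑ i ∈ G, A i j with hc
  have h0 : ∀ j, 0 ≤ c j := fun j => Finset.sum_nonneg fun i _ => hnonneg i j
  have h1 : ∀ j, c j ≤ 1 := by
    intro j
    rw [hc]
    calc ∑ i ∈ G, A i j ≤ ∑ i, A i j :=
          Finset.sum_le_sum_of_subset_of_nonneg (Finset.subset_univ G)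
            (fun i _ _ => hnonneg i j)
      _ = 1 := hcol j
  have hs : ∑ j, c j = (k : ℝ) := by
    rw [hc]
    rw [Finset.sum_comm]
    rw [Finset.sum_congr rfl (fun i _ => hrow i), Finset.sum_const, hGcard,
      nsmul_eq_mul, mul_one]
  have hbsy : bsum y k = ∑ j, c j * x j := by
    have h1' : bsum y k = ∑ i ∈ G, y i := by
      rw [bsum, ← hσ, ← hF, hG]
      rw [Finset.sum_image (fun a _ b _ h => σ.injective h)]
    rw [h1']
    have h2' : ∀ i, y i = ∑ j, A i j * x j := by
      intro i; simp [hy, Matrix.mulVec, dotProduct]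
    rw [Finset.sum_congr rfl (fun i _ => h2' i), Finset.sum_comm]
    apply Finset.sum_congr rfl
    intro j _
    rw [hc, Finset.sum_mul]
  rw [hbsy]
  exact bsum_le x k hk c h0 h1 hs

/-- Every coordinate value is a difference of consecutive bsums. -/
lemma bsum_diff {m : ℕ} (x : Fin m → ℝ) (i : Fin m) :
    ∃ k < m, x i = bsum x (k + 1) - bsum x k := by
  set σ := Tuple.sort x with hσ
  refine ⟨(σ.symm i : ℕ), (σ.symm i).isLt, ?_⟩
  set k := ((σ.symm i : Fin m) : ℕ) with hk
  have hins : Finset.univ.filter (fun j : Fin m => (j : ℕ) < k + 1)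
      = insert (σ.symm i) (Finset.univ.filter (fun j : Fin m => (j : ℕ) < k)) := by
    ext j
    simp only [Finset.mem_filter, Finset.mem_univ, true_and, Finset.mem_insert]
    constructor
    · intro hj
      rcases Nat.lt_or_ge (j : ℕ) k with h | h
      · exact Or.inr h
      · left; apply Fin.ext; omega
    · rintro (rfl | hj)
      · omega
      · omega
  have hnot : σ.symm i ∉ Finset.univ.filter (fun j : Fin m => (j : ℕ) < k) := by
    simp [hk]
  rw [bsum, bsum, ← hσ, hins, Finset.sum_insert hnot]
  simp

/-- A real sequence with vanishing steps that eventually clusters arbitrarily close to a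
finite set converges. -/
lemma tendsto_of_steps_and_cluster (u : ℕ → ℝ) (D : Finset ℝ)
    (hstep : Tendsto (fun t => u (t + 1) - u t) atTop (𝓝 0))
    (hclose : ∀ ε > 0, ∀ᶠ t in atTop, ∃ d ∈ D, |u t - d| < ε) :
    ∃ L : ℝ, Tendsto u atTop (𝓝 L) := by
  -- separation constant
  set E := (D ×ˢ D).filter (fun p => p.1 ≠ p.2) with hE
  have hsep : ∃ ε₀ > 0, ∀ d ∈ D, ∀ d' ∈ D, d ≠ d' → 3 * ε₀ ≤ |d - d'| := by
    by_cases h : E.Nonempty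
    · refine ⟨E.inf' h (fun p => |p.1 - p.2|) / 3, ?_, ?_⟩
      · have : ∀ p ∈ E, 0 < |p.1 - p.2| := by
          intro p hp
          rw [hE, Finset.mem_filter] at hp
          exact abs_pos.mpr (sub_ne_zero.mpr hp.2)
        have := (Finset.lt_inf'_iff h).mpr (fun p hp => this p hp)
        linarith
      · intro d hd d' hd' hne
        have hmem : (d, d') ∈ E := by
          rw [hE, Finset.mem_filter]
          exact ⟨Finset.mem_product.mpr ⟨hd, hd'⟩, hne⟩
        have := Finset.inf'_le (fun p => |p.1 - p.2|) hmem
        linarith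
    · refine ⟨1, one_pos, ?_⟩
      intro d hd d' hd' hne
      exact absurd (Finset.filter_nonempty_iff.mpr
        ⟨(d, d'), Finset.mem_product.mpr ⟨hd, hd'⟩, hne⟩) h
  obtain ⟨ε₀, hε₀, hsep⟩ := hsep
  -- Cauchy
  have hC : CauchySeq u := by
    rw [Metric.cauchySeq_iff]
    intro η hη
    set ε := min ε₀ (η / 3) with hε
    have hεpos : 0 < ε := lt_min hε₀ (by linarith)
    have h1 := hclose ε hεpos
    have h2 : ∀ᶠ t in atTop, |u (t + 1) - u t| < ε := by
      have := hstep.eventually (eventually_abs_sub_lt 0 hεpos)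
      simpa using this
    obtain ⟨T, hT⟩ := (h1.and h2).exists_forall_of_atTop
    -- fixed anchor
    obtain ⟨d₀, hd₀D, hd₀⟩ := (hT T le_rfl).1
    have hanchor : ∀ t, T ≤ t → |u t - d₀| < ε := by
      intro t ht
      induction t with
      | zero =>
          have : T = 0 := Nat.le_zero.mp ht
          rw [this] at hd₀; exact hd₀
      | succ n ih =>
          rcases Nat.lt_or_ge T (n + 1) with h | h
          · have hn : T ≤ n := by omega
            have ihn := ih hn
            obtain ⟨d', hd'D, hd'⟩ := (hT (n + 1) (by omega)).1
            have hstepn := (hT n hn).2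
            have : |d' - d₀| < 3 * ε := by
              have : |d' - d₀| ≤ |u (n+1) - d'| + |u (n+1) - u n| + |u n - d₀| := by
                cases abs_cases (u (n+1) - d') with
                | _ h1 => cases abs_cases (u (n+1) - u n) with
                  | _ h2 => cases abs_cases (u n - d₀) with
                    | _ h3 => cases abs_cases (d' - d₀) with
                      | _ h4 => linarith [h1.1, h2.1, h3.1, h4.1]
              linarith
            have hdd : d' = d₀ := by
              by_contra hne
              have := hsep d' hd'D d₀ hd₀D hne
              have hεle : ε ≤ ε₀ := min_le_left _ _
              linarith
            rw [← hdd]; exact hd'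
          · have : T = n + 1 := by omega
            rw [this] at hd₀; exact hd₀
    refine ⟨T, fun s hs t ht => ?_⟩
    have h1 := hanchor s hs
    have h2 := hanchor t ht
    rw [Real.dist_eq]
    have hεη : ε ≤ η / 3 := min_le_right _ _
    cases abs_cases (u s - d₀) with
    | _ ha => cases abs_cases (u t - d₀) with
      | _ hb => cases abs_cases (u s - u t) with
        | _ hc => linarith [ha.1, hb.1, hc.1]
  exact cauchySeq_tendsto_of_complete hC

/-- For a sequence of m×m doubly stochastic matrices with diagonal
entries bounded below by δ > 0, the backward-product dynamics x(t+1) = A(t) x(t)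
converges for any initial vector x(0). -/
theorem stmt0 (m : ℕ) (hm : 2 ≤ m) (δ : ℝ) (hδ : 0 < δ)
    (A : ℕ → Matrix (Fin m) (Fin m) ℝ)
    (hnonneg : ∀ t i j, 0 ≤ A t i j)
    (hrow : ∀ t i, ∑ j, A t i j = 1)
    (hcol : ∀ t j, ∑ i, A t i j = 1)
    (hdiag : ∀ t i, δ ≤ A t i i)
    (x : ℕ → Fin m → ℝ)
    (hx : ∀ t, x (t + 1) = (A t).mulVec (x t)) :
    ∃ L : Fin m → ℝ, Tendsto x atTop (𝓝 L) := by
  haveI : NeZero m := ⟨by omega⟩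
  -- Energy
  set V : ℕ → ℝ := fun t => ∑ j, x t j ^ 2 with hV
  have hVdrop : ∀ t i, δ * (x (t + 1) i - x t i) ^ 2 ≤ V t - V (t + 1) := by
    intro t i
    have := energy_drop (A t) δ (hnonneg t) (hrow t) (hcol t) (hdiag t) (x t) i
    rw [← hx t] at this
    simpa [hV] using this
  have hVanti : Antitone V := by
    apply antitone_nat_of_succ_le
    intro t
    have := hVdrop t ⟨0, by omega⟩
    nlinarith [sq_nonneg (x (t + 1) ⟨0, by omega⟩ - x t ⟨0, by omega⟩)]
  have hVpos : ∀ t, 0 ≤ V t := fun t => Finset.sum_nonneg fun j _ => sq_nonneg _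
  have hVbdd : BddBelow (Set.range V) := ⟨0, fun v ⟨t, ht⟩ => ht ▸ hVpos t⟩
  obtain ⟨l, hl⟩ : ∃ l, Tendsto V atTop (𝓝 l) :=
    ⟨_, tendsto_atTop_ciInf hVanti hVbdd⟩
  have hVdiff : Tendsto (fun t => V t - V (t + 1)) atTop (𝓝 0) := by
    have h2 : Tendsto (fun t => V (t + 1)) atTop (𝓝 l) :=
      hl.comp (tendsto_add_atTop_nat 1)
    simpa using hl.sub h2
  -- vanishing steps for each coordinate
  have hstep : ∀ i, Tendsto (fun t => x (t + 1) i - x t i) atTop (𝓝 0) := by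
    intro i
    have hsq : Tendsto (fun t => (x (t + 1) i - x t i) ^ 2) atTop (𝓝 0) := by
      apply squeeze_zero (fun t => sq_nonneg _) (fun t => ?_)
        (g := fun t => (V t - V (t + 1)) / δ)
      · simpa using hVdiff.div_const δ
      · have := hVdrop t i
        rw [le_div_iff₀ hδ]
        linarith
    have habs : Tendsto (fun t => |x (t + 1) i - x t i|) atTop (𝓝 0) := by
      have := (Real.continuous_sqrt.tendsto 0).comp hsq
      simpa [Function.comp_def, Real.sqrt_sq_eq_abs] using this
    exact tendsto_zero_iff_abs_tendsto_zero _ |>.mpr habs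
  -- bsum convergence
  have hxub : ∀ t i, x t i ≤ Finset.univ.sup' Finset.univ_nonempty (x 0) := by
    set M := Finset.univ.sup' Finset.univ_nonempty (x 0) with hM
    intro t
    induction t with
    | zero => intro i; exact Finset.le_sup' (x 0) (Finset.mem_univ i)
    | succ n ih =>
        intro i
        rw [hx n]
        have : (A n).mulVec (x n) i = ∑ j, A n i j * x n j := by
          simp [Matrix.mulVec, dotProduct]
        rw [this]
        calc ∑ j, A n i j * x n j ≤ ∑ j, A n i j * M :=
              Finset.sum_le_sum fun j _ =>
                mul_le_mul_of_nonneg_left (ih j) (hnonneg n i j)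
          _ = M := by rw [← Finset.sum_mul, hrow n i, one_mul]
  have hBmono : ∀ k, k ≤ m → Monotone (fun t => bsum (x t) k) := by
    intro k hk
    apply monotone_nat_of_le_succ
    intro t
    rw [hx t]
    exact bsum_mono_step (A t) (hnonneg t) (hrow t) (hcol t) (x t) k hk
  have hBbdd : ∀ k, k ≤ m → BddAbove (Set.range fun t => bsum (x t) k) := by
    intro k hk
    set M := Finset.univ.sup' Finset.univ_nonempty (x 0) with hM
    refine ⟨k * |M|, ?_⟩
    rintro v ⟨t, rfl⟩
    set F := Finset.univ.filter (fun j : Fin m => (j : ℕ) < k) with hF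
    have hFcard : F.card ≤ k := by
      have := Finset.card_le_card_of_injOn (s := F) (t := Finset.range k)
        (fun j : Fin m => (j : ℕ))
        (fun j hj => by
          rw [hF, Finset.mem_coe, Finset.mem_filter] at hj
          exact Finset.mem_range.mpr hj.2)
        (fun a _ b _ h => Fin.ext h)
      simpa using this
    calc bsum (x t) k = ∑ j ∈ F, x t (Tuple.sort (x t) j) := rfl
      _ ≤ ∑ j ∈ F, |M| :=
          Finset.sum_le_sum fun j _ => (hxub t _).trans (le_abs_self M)
      _ = F.card * |M| := by rw [Finset.sum_const, nsmul_eq_mul]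
      _ ≤ k * |M| :=
          mul_le_mul_of_nonneg_right (Nat.cast_le.mpr hFcard) (abs_nonneg M)
  have hBconv : ∀ k, k ≤ m → ∃ s, Tendsto (fun t => bsum (x t) k) atTop (𝓝 s) :=
    fun k hk => ⟨_, tendsto_atTop_ciSup (hBmono k hk) (hBbdd k hk)⟩
  set Sig : ℕ → ℝ := fun k => limUnder atTop (fun t => bsum (x t) k) with hSigdef
  have hSig : ∀ k, k ≤ m → Tendsto (fun t => bsum (x t) k) atTop (𝓝 (Sig k)) := by
    intro k hk
    obtain ⟨s, hs⟩ := hBconv k hk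
    have h2 : Sig k = s := by rw [hSigdef]; exact hs.limUnder_eq
    rw [h2]; exact hs
  set D : Finset ℝ := (Finset.range m).image (fun k => Sig (k + 1) - Sig k) with hD
  have hclose : ∀ i : Fin m, ∀ ε > 0, ∀ᶠ t in atTop, ∃ d ∈ D, |x t i - d| < ε := by
    intro i ε hε
    have hev : ∀ᶠ t in atTop, ∀ k ∈ Finset.range (m + 1),
        |bsum (x t) k - Sig k| < ε / 2 := by
      rw [Finset.eventually_all]
      intro k hk
      exact (hSig k (by simp at hk; omega)).eventually
        (eventually_abs_sub_lt _ (by linarith))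
    filter_upwards [hev] with t ht
    obtain ⟨k, hkm, hkeq⟩ := bsum_diff (x t) i
    refine ⟨Sig (k + 1) - Sig k,
      Finset.mem_image.mpr ⟨k, Finset.mem_range.mpr hkm, rfl⟩, ?_⟩
    have h1 := ht (k + 1) (Finset.mem_range.mpr (by omega))
    have h2 := ht k (Finset.mem_range.mpr (by omega))
    rw [hkeq, show bsum (x t) (k + 1) - bsum (x t) k - (Sig (k + 1) - Sig k)
      = (bsum (x t) (k + 1) - Sig (k + 1)) - (bsum (x t) k - Sig k) by ring]
    calc |(bsum (x t) (k + 1) - Sig (k + 1)) - (bsum (x t) k - Sig k)|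
        ≤ |bsum (x t) (k + 1) - Sig (k + 1)| + |bsum (x t) k - Sig k| := abs_sub _ _
      _ < ε := by linarith
  have hLi : ∀ i : Fin m, ∃ Li, Tendsto (fun t => x t i) atTop (𝓝 Li) :=
    fun i => tendsto_of_steps_and_cluster (fun t => x t i) D (hstep i) (hclose i)
  choose L hL using hLi
  exact ⟨L, tendsto_pi_nhds.mpr hL⟩
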